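/- Consider the spiral 𝒮 = {ζ ∈ ℂ : ζ = r·e^{ir} for some real r ≥ 0}. Then for each complex number z ∈ ℂ there exist two elements ζ₁, ζ₂ ∈ 𝒮 such that ζ₁ − ζ₂ = z. That is, regarding 𝒮 as a subset of ℝ², one has 𝒮 − 𝒮 = ℝ². -/

import Mathlib

open Complex Real

theorem spiral_difference_set_is_whole_plane
    (S : Set ℂ)
    (hS : S = {ζ : ℂ | ∃ t : ℝ, 0 ≤ t ∧ ζ = (t : ℂ) * Complex.exp ((t : ℂ) * Complex.I)}) :
    ∀ z : ℂ, ∃ ζ₁ ∈ S, ∃ ζ₂ ∈ S, ζ₁ - ζ₂ = z := by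
  subst hS
  intro z
  by_cases hz : z = 0
  · exact ⟨0, ⟨0, le_refl 0, by simp⟩, 0, ⟨0, le_refl 0, by simp⟩, by simp [hz]⟩
  set c : ℝ := ‖z‖ with hc
  have hc0 : 0 < c := by simpa [hc] using norm_pos_iff.mpr hz
  set θ : ℝ := z.arg with hθ
  -- the auxiliary function
  set f : ℝ → ℂ := fun t => (t : ℂ) + z * Complex.exp (-(t : ℂ) * Complex.I) with hf
  set g : ℝ → ℝ := fun t => ‖f t‖ - t - (f t).arg with hg
  -- choose n large
  obtain ⟨n, hn⟩ := exists_nat_gt ((c - θ) / (2 * π))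
  set a : ℝ := θ + 2 * π * n with ha
  set b : ℝ := a + π with hb
  have hca : c < a := by
    have h2π : (0:ℝ) < 2 * π := by positivity
    have := (div_lt_iff₀ h2π).mp hn
    nlinarith
  have hab : a ≤ b := by
    have := Real.pi_pos
    simp [hb]; linarith
  -- |z * exp(-t I)| = c
  have habs : ∀ t : ℝ, ‖z * Complex.exp (-(t : ℂ) * Complex.I)‖ = c := by
    intro t
    have : (-(t : ℂ)) * Complex.I = ((-t : ℝ) : ℂ) * Complex.I := by push_cast; ring
    rw [norm_mul, this, Complex.norm_exp_ofReal_mul_I, mul_one]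
  -- positivity of real part on [a, b]
  have hre : ∀ t ∈ Set.Icc a b, 0 < (f t).re := by
    intro t ht
    have h1 : c ≤ t := le_trans hca.le ht.1
    have h2 : -c ≤ (z * Complex.exp (-(t : ℂ) * Complex.I)).re := by
      have := Complex.abs_re_le_norm (z * Complex.exp (-(t : ℂ) * Complex.I))
      rw [habs t] at this
      cases' abs_le.mp this with h _
      linarith [neg_abs_le (z * Complex.exp (-(t : ℂ) * Complex.I)).re]
    have : (f t).re = t + (z * Complex.exp (-(t : ℂ) * Complex.I)).re := by
      simp [hf]
    rw [this]
    have h1' : c < t ∨ c = t := lt_or_eq_of_le h1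
    rcases h1' with h | h
    · linarith
    · -- t = c; but also a ≤ t means c < t. contradiction path
      linarith [ht.1, hca]
  -- continuity of g on [a, b]
  have hfc : Continuous f := by fun_prop
  have hgc : ContinuousOn g (Set.Icc a b) := by
    apply ContinuousOn.sub
    apply ContinuousOn.sub
    · exact (continuous_norm.comp hfc).continuousOn
    · exact continuous_id.continuousOn
    · intro t ht
      have hct : ContinuousAt (fun t => (f t).arg) t :=
        (Complex.continuousAt_arg (by rw [Complex.mem_slitPlane_iff]; left; exact hre t ht)).comp
          hfc.continuousAt
      exact hct.continuousWithinAt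
  -- value at a
  have hexpa : Complex.exp (-(a:ℂ) * Complex.I) = Complex.exp (-(θ:ℂ) * Complex.I) := by
    have h1 : Complex.exp (((n:ℤ):ℂ) * (2*(π:ℂ)*Complex.I)) = 1 :=
      Complex.exp_int_mul_two_pi_mul_I _
    have h2 : -(a:ℂ)*Complex.I + ((n:ℤ):ℂ) * (2*(π:ℂ)*Complex.I) = -(θ:ℂ)*Complex.I := by
      push_cast [ha]; ring
    calc Complex.exp (-(a:ℂ)*Complex.I)
        = Complex.exp (-(a:ℂ)*Complex.I) * Complex.exp (((n:ℤ):ℂ)*(2*(π:ℂ)*Complex.I)) := by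
          rw [h1, mul_one]
      _ = Complex.exp (-(θ:ℂ)*Complex.I) := by rw [← Complex.exp_add, h2]
  have hz_polar : z = (c:ℂ) * Complex.exp ((θ:ℂ) * Complex.I) :=
    (Complex.norm_mul_exp_arg_mul_I z).symm
  have hza : z * Complex.exp (-(a:ℂ) * Complex.I) = (c:ℂ) := by
    rw [hexpa]
    conv_lhs => rw [hz_polar]
    rw [mul_assoc, ← Complex.exp_add,
      show (θ:ℂ)*Complex.I + -(θ:ℂ)*Complex.I = 0 by ring, Complex.exp_zero, mul_one]
  have hzb : z * Complex.exp (-(b:ℂ) * Complex.I) = -(c:ℂ) := by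
    have hmpi : Complex.exp (-((π:ℂ)*Complex.I)) = -1 := by
      rw [Complex.exp_neg, Complex.exp_pi_mul_I]; norm_num
    rw [show (-(b:ℂ)*Complex.I) = -(a:ℂ)*Complex.I + -((π:ℂ)*Complex.I) by push_cast [hb]; ring,
      Complex.exp_add, hmpi]
    calc z * (Complex.exp (-(a:ℂ)*Complex.I) * (-1))
        = (z * Complex.exp (-(a:ℂ)*Complex.I)) * (-1) := by ring
      _ = -(c:ℂ) := by rw [hza]; ring
  have hga : g a = c := by
    have h1 : f a = ((a + c : ℝ) : ℂ) := by
      simp only [hf]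
      rw [hza]; push_cast; ring
    simp only [hg, h1, Complex.norm_real, Real.norm_eq_abs,
      Complex.arg_ofReal_of_nonneg (by linarith : (0:ℝ) ≤ a + c)]
    rw [_root_.abs_of_nonneg (by linarith : (0:ℝ) ≤ a + c)]
    ring
  have hgb : g b = -c := by
    have hb1 : c < b := by linarith [Real.pi_pos]
    have h1 : f b = ((b - c : ℝ) : ℂ) := by
      simp only [hf]
      rw [hzb]; push_cast; ring
    simp only [hg, h1, Complex.norm_real, Real.norm_eq_abs,
      Complex.arg_ofReal_of_nonneg (by linarith : (0:ℝ) ≤ b - c)]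
    rw [_root_.abs_of_nonneg (by linarith : (0:ℝ) ≤ b - c)]
    ring
  -- IVT
  have h0mem : (0:ℝ) ∈ Set.Icc (g b) (g a) := by
    rw [hga, hgb]; constructor <;> linarith
  obtain ⟨t, ht, hgt⟩ := intermediate_value_Icc' hab hgc h0mem
  set r : ℝ := ‖f t‖ with hr
  have hr0 : (0:ℝ) ≤ r := norm_nonneg _
  have ht0 : (0:ℝ) ≤ t := le_trans (by linarith : (0:ℝ) ≤ a) ht.1
  have harg : (f t).arg = r - t := by
    have : r - t - (f t).arg = 0 := hgt
    linarith
  have hw : f t = (r:ℂ) * Complex.exp (((r - t : ℝ):ℂ) * Complex.I) := by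
    conv_lhs => rw [← Complex.norm_mul_exp_arg_mul_I (f t)]
    rw [harg]
  have key : (r:ℂ) * Complex.exp ((r:ℂ) * Complex.I)
      - (t:ℂ) * Complex.exp ((t:ℂ) * Complex.I) = z := by
    have h1 : (r:ℂ) * Complex.exp ((r:ℂ)*Complex.I) = f t * Complex.exp ((t:ℂ)*Complex.I) := by
      rw [hw, mul_assoc, ← Complex.exp_add]
      congr 2
      push_cast; ring
    rw [h1]
    simp only [hf]
    rw [add_mul, mul_assoc, ← Complex.exp_add,
      show -(t:ℂ)*Complex.I + (t:ℂ)*Complex.I = 0 by ring, Complex.exp_zero, mul_one]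
    ring
  exact ⟨_, ⟨r, hr0, rfl⟩, _, ⟨t, ht0, rfl⟩, key⟩
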